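/- In the three-agent market with strict/indifferent preferences R_1: w_2 I w_3 P w_1, R_2 = R_3: w_1 P w_2 P w_3, and tie-breaking profile where every agent's order is 1 ≻ 2 ≻ 3, TTC_≻(R) = (w_2, w_1, w_3). If agent 1 misreports R'_1: w_3 P w_2 P w_1, then TTC_≻(R'_1, R_2, R_3) = (w_3, w_2, w_1). Agent 1 is indifferent between his two assignments (w_2 I_1 w_3) while agent 3 strictly improves (w_1 P_3 w_3), so coalition {1,3} has a profitable group manipulation and TTC_≻ is not group strategy-proof under general indifferences. -/

import Mathlib

open scoped Classical

namespace ShapleyScarf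

/-- A weak preference relation: complete (total) and transitive, hence reflexive. -/
structure WeakOrder (H : Type*) where
  rel : H → H → Prop
  total : ∀ a b, rel a b ∨ rel b a
  trans : ∀ a b c, rel a b → rel b c → rel a c

namespace WeakOrder
variable {H : Type*}
/-- Strict part `P` of a weak preference. -/
def P (R : WeakOrder H) (a b : H) : Prop := R.rel a b ∧ ¬ R.rel b a
/-- Indifference part `I` of a weak preference. -/
def I (R : WeakOrder H) (a b : H) : Prop := R.rel a b ∧ R.rel b a
end WeakOrder

/-- `lt` is a strict linear order on agents (a tie-breaking order). -/
def IsTieBreak {n : ℕ} (lt : Fin n → Fin n → Prop) : Prop :=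
  (∀ a b, a ≠ b → lt a b ∨ lt b a) ∧ Transitive lt ∧ ∀ a, ¬ lt a a

section Defs
variable {n : ℕ} {H : Type*} {B : Type*}

/-- Strict part of the tie-broken preference `P_{i,≻}`: `a` above `b` iff
`a P b`, or `a I b` and the owner of `a` comes before the owner of `b` in `≻_i`. -/
def tieBroken (w : Fin n ≃ H) (R : WeakOrder H) (lt : Fin n → Fin n → Prop) (a b : H) : Prop :=
  R.P a b ∨ (R.I a b ∧ lt (w.symm a) (w.symm b))

/-- The weak tie-broken relation `R_{i,≻}` (reflexive closure of the strict part). -/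
def tieBrokenWeak (w : Fin n ≃ H) (R : WeakOrder H) (lt : Fin n → Fin n → Prop)
    (a b : H) : Prop :=
  a = b ∨ tieBroken w R lt a b

/-- The owner (in `S`) of the `pref`-best house among the endowments of the
remaining agents `S`; the agent with this endowment is whom `i` points at. -/
noncomputable def point (w : Fin n ≃ H) (pref : H → H → Prop) (S : Finset (Fin n))
    (i : Fin n) : Fin n :=
  if h : (S.filter fun m => ∀ j ∈ S, j = m ∨ pref (w m) (w j)).Nonempty then
    (S.filter fun m => ∀ j ∈ S, j = m ∨ pref (w m) (w j)).min' h
  else i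

/-- The agents of `S` lying on some trading cycle of the pointing map. -/
noncomputable def cycleAgents (w : Fin n ≃ H) (pref : Fin n → H → H → Prop)
    (S : Finset (Fin n)) : Finset (Fin n) :=
  S.filter fun i => ∃ k, 0 < k ∧ (fun j => point w (pref j) S j)^[k] i = i

/-- Top trading cycles on strict preferences, fuel-based recursion: in each round all
current trading cycles are executed and their agents removed. -/
noncomputable def TTCaux (w : Fin n ≃ H) (pref : Fin n → H → H → Prop) :
    ℕ → Finset (Fin n) → Fin n → H
  | 0, _, i => w i
  | fuel + 1, S, i =>
      if i ∈ cycleAgents w pref S then w (point w (pref i) S i)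
      else TTCaux w pref fuel (S \ cycleAgents w pref S) i

/-- Gale's top trading cycles algorithm for a strict preference profile. -/
noncomputable def TTCstrict (w : Fin n ≃ H) (pref : Fin n → H → H → Prop) : Fin n → H :=
  TTCaux w pref n Finset.univ

/-- Round (executed-cycle index, starting from 1) at which an agent is assigned. -/
noncomputable def TTCroundAux (w : Fin n ≃ H) (pref : Fin n → H → H → Prop) :
    ℕ → Finset (Fin n) → Fin n → ℕ
  | 0, _, _ => 1
  | fuel + 1, S, i =>
      if i ∈ cycleAgents w pref S then 1
      else TTCroundAux w pref fuel (S \ cycleAgents w pref S) i + 1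

/-- TTC with fixed tie-breaking: `TTC_≻(R) = TTC(R_≻)`. -/
noncomputable def TTCtb (w : Fin n ≃ H) (R : Fin n → WeakOrder H)
    (tb : Fin n → Fin n → Fin n → Prop) : Fin n → H :=
  TTCstrict w fun i => tieBroken w (R i) (tb i)

/-- The round in which agent `i` is assigned under `TTC_≻(R)`. -/
noncomputable def TTCtbRound (w : Fin n ≃ H) (R : Fin n → WeakOrder H)
    (tb : Fin n → Fin n → Fin n → Prop) (i : Fin n) : ℕ :=
  TTCroundAux w (fun a => tieBroken w (R a) (tb a)) n Finset.univ i

/-- Objective indifferences w.r.t. the partition of `H` into the fibers of `blk`: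
indifference holds exactly between houses in the same block. -/
def ObjInd (blk : H → B) (R : WeakOrder H) : Prop :=
  ∀ a b, R.I a b ↔ blk a = blk b

/-- `x` is blocked: some coalition `Q` can reallocate its own endowments making
all its members weakly better off and one strictly better off. -/
def Blocks (w : Fin n ≃ H) (R : Fin n → WeakOrder H) (x : Fin n → H) : Prop :=
  ∃ (Q : Finset (Fin n)) (y : Fin n ≃ H),
    Q.image (⇑y) = Q.image (⇑w) ∧
    (∀ i ∈ Q, (R i).rel (y i) (x i)) ∧
    ∃ i ∈ Q, (R i).P (y i) (x i)

/-- `x` is weakly blocked: some nonempty coalition can reallocate its own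
endowments making all of its members strictly better off. -/
def WeaklyBlocks (w : Fin n ≃ H) (R : Fin n → WeakOrder H) (x : Fin n → H) : Prop :=
  ∃ Q : Finset (Fin n), Q.Nonempty ∧ ∃ y : Fin n ≃ H,
    Q.image (⇑y) = Q.image (⇑w) ∧ ∀ i ∈ Q, (R i).P (y i) (x i)

/-- `y` Pareto dominates `x`. -/
def ParetoDom (R : Fin n → WeakOrder H) (y x : Fin n → H) : Prop :=
  (∀ i, (R i).rel (y i) (x i)) ∧ ∃ i, (R i).P (y i) (x i)

end Defs


/-! ### Auxiliary lemmas for the counterexample computation -/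

lemma tb_rel {n : ℕ} {H : Type*} {w : Fin n ≃ H} {W : WeakOrder H}
    {lt : Fin n → Fin n → Prop} {a b : H} (h : tieBroken w W lt a b) : W.rel a b :=
  h.elim (·.1) (·.1.1)

lemma point_eq {n : ℕ} (pref : Fin n → Fin n → Prop) (S : Finset (Fin n)) (i b : Fin n)
    (hbS : b ∈ S) (hb : ∀ j ∈ S, j = b ∨ pref b j)
    (huniq : ∀ m ∈ S, (∀ j ∈ S, j = m ∨ pref m j) → m = b) :
    point (Equiv.refl (Fin n)) pref S i = b := by
  have hfilter : (S.filter fun m => ∀ j ∈ S, j = m ∨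
      pref ((Equiv.refl (Fin n)) m) ((Equiv.refl (Fin n)) j)) = {b} := by
    ext x
    rw [Finset.mem_filter, Finset.mem_singleton]
    constructor
    · rintro ⟨hx, hq⟩; exact huniq x hx hq
    · rintro rfl; exact ⟨hbS, hb⟩
  unfold point
  simp only [hfilter]
  simp

lemma point_singleton {n : ℕ} (pref : Fin n → Fin n → Prop) (i : Fin n) :
    point (Equiv.refl (Fin n)) pref {i} i = i := by
  apply point_eq
  · exact Finset.mem_singleton_self i
  · intro j hj; exact Or.inl (Finset.mem_singleton.mp hj)
  · intro m hm _; exact Finset.mem_singleton.mp hm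

/-- Pointing of an agent with strict preference `0 P 1 P 2` over the full set. -/
lemma point01 (W : WeakOrder (Fin 3)) (lt : Fin 3 → Fin 3 → Prop) (i : Fin 3)
    (h1 : W.P 0 1) (h2 : W.P 1 2) :
    point (Equiv.refl (Fin 3)) (tieBroken (Equiv.refl (Fin 3)) W lt) Finset.univ i = 0 := by
  apply point_eq
  · exact Finset.mem_univ _
  · intro j _
    fin_cases j
    · exact Or.inl rfl
    · exact Or.inr (Or.inl h1)
    · exact Or.inr (Or.inl ⟨W.trans _ _ _ h1.1 h2.1, fun h => h1.2 (W.trans _ _ _ h2.1 h)⟩)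
  · intro m _ hq
    fin_cases m
    · rfl
    · rcases hq 0 (Finset.mem_univ _) with h | h
      · exact absurd h (by decide)
      · exact absurd (tb_rel h) h1.2
    · rcases hq 0 (Finset.mem_univ _) with h | h
      · exact absurd h (by decide)
      · exact absurd (W.trans _ _ _ h2.1 (tb_rel h)) h1.2

/-- TTC computation when the pointing map over `univ` is `0 ↦ 1 ↦ 0`, `2 ↦ 0`. -/
lemma TTC_case1 (p : Fin 3 → Fin 3 → Fin 3 → Prop)
    (h0 : point (Equiv.refl (Fin 3)) (p 0) Finset.univ 0 = 1)
    (h1 : point (Equiv.refl (Fin 3)) (p 1) Finset.univ 1 = 0)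
    (h2 : point (Equiv.refl (Fin 3)) (p 2) Finset.univ 2 = 0) :
    TTCstrict (Equiv.refl (Fin 3)) p = ![1, 0, 2] := by
  have hg : (fun j => point (Equiv.refl (Fin 3)) (p j) Finset.univ j) = ![1, 0, 0] := by
    funext j; fin_cases j
    · simpa using h0
    · simpa using h1
    · simpa using h2
  have haux : ∀ m : ℕ, (![1, 0, 0] : Fin 3 → Fin 3)^[m] 0 = 0 ∨
      (![1, 0, 0] : Fin 3 → Fin 3)^[m] 0 = 1 := by
    intro m
    induction m with
    | zero => exact Or.inl rfl
    | succ m ih =>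
        rw [Function.iterate_succ_apply']
        rcases ih with h | h <;> rw [h]
        · exact Or.inr (by decide)
        · exact Or.inl (by decide)
  have hcyc : cycleAgents (Equiv.refl (Fin 3)) p Finset.univ = {0, 1} := by
    ext i
    simp only [cycleAgents, Finset.mem_filter, Finset.mem_univ, true_and, hg]
    fin_cases i
    · exact ⟨fun _ => by decide, fun _ => ⟨2, by norm_num, by decide⟩⟩
    · exact ⟨fun _ => by decide, fun _ => ⟨2, by norm_num, by decide⟩⟩
    · constructor
      · rintro ⟨k, hk, hfix⟩
        obtain ⟨k', rfl⟩ := Nat.exists_eq_succ_of_ne_zero hk.ne'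
        rw [Function.iterate_succ_apply] at hfix
        have hfix' : (![1, 0, 0] : Fin 3 → Fin 3)^[k'] 0 = 2 := hfix
        rcases haux k' with h | h <;> rw [hfix'] at h <;> exact absurd h (by decide)
      · intro h; exact absurd h (by decide)
  have hsdiff : (Finset.univ \ ({0, 1} : Finset (Fin 3))) = {2} := by decide
  unfold TTCstrict
  funext i
  show TTCaux (Equiv.refl (Fin 3)) p (2 + 1) Finset.univ i = _
  rw [TTCaux, hcyc, hsdiff]
  fin_cases i
  · rw [if_pos (by decide)]; simpa using h0
  · rw [if_pos (by decide)]; simpa using h1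
  · rw [if_neg (by decide)]
    show TTCaux (Equiv.refl (Fin 3)) p (1 + 1) {2} 2 = _
    rw [TTCaux]
    have hs : point (Equiv.refl (Fin 3)) (p 2) {2} 2 = 2 := point_singleton _ _
    have hmem : (2 : Fin 3) ∈ cycleAgents (Equiv.refl (Fin 3)) p {2} :=
      Finset.mem_filter.mpr ⟨by decide, 1, one_pos, by simpa using hs⟩
    rw [if_pos hmem]
    simpa using hs

/-- TTC computation when the pointing map over `univ` is `0 ↦ 2 ↦ 0`, `1 ↦ 0`. -/
lemma TTC_case2 (p : Fin 3 → Fin 3 → Fin 3 → Prop)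
    (h0 : point (Equiv.refl (Fin 3)) (p 0) Finset.univ 0 = 2)
    (h1 : point (Equiv.refl (Fin 3)) (p 1) Finset.univ 1 = 0)
    (h2 : point (Equiv.refl (Fin 3)) (p 2) Finset.univ 2 = 0) :
    TTCstrict (Equiv.refl (Fin 3)) p = ![2, 1, 0] := by
  have hg : (fun j => point (Equiv.refl (Fin 3)) (p j) Finset.univ j) = ![2, 0, 0] := by
    funext j; fin_cases j
    · simpa using h0
    · simpa using h1
    · simpa using h2
  have haux : ∀ m : ℕ, (![2, 0, 0] : Fin 3 → Fin 3)^[m] 0 = 0 ∨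
      (![2, 0, 0] : Fin 3 → Fin 3)^[m] 0 = 2 := by
    intro m
    induction m with
    | zero => exact Or.inl rfl
    | succ m ih =>
        rw [Function.iterate_succ_apply']
        rcases ih with h | h <;> rw [h]
        · exact Or.inr (by decide)
        · exact Or.inl (by decide)
  have hcyc : cycleAgents (Equiv.refl (Fin 3)) p Finset.univ = {0, 2} := by
    ext i
    simp only [cycleAgents, Finset.mem_filter, Finset.mem_univ, true_and, hg]
    fin_cases i
    · exact ⟨fun _ => by decide, fun _ => ⟨2, by norm_num, by decide⟩⟩
    · constructor
      · rintro ⟨k, hk, hfix⟩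
        obtain ⟨k', rfl⟩ := Nat.exists_eq_succ_of_ne_zero hk.ne'
        rw [Function.iterate_succ_apply] at hfix
        have hfix' : (![2, 0, 0] : Fin 3 → Fin 3)^[k'] 0 = 1 := hfix
        rcases haux k' with h | h <;> rw [hfix'] at h <;> exact absurd h (by decide)
      · intro h; exact absurd h (by decide)
    · exact ⟨fun _ => by decide, fun _ => ⟨2, by norm_num, by decide⟩⟩
  have hsdiff : (Finset.univ \ ({0, 2} : Finset (Fin 3))) = {1} := by decide
  unfold TTCstrict
  funext i
  show TTCaux (Equiv.refl (Fin 3)) p (2 + 1) Finset.univ i = _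
  rw [TTCaux, hcyc, hsdiff]
  fin_cases i
  · rw [if_pos (by decide)]; simpa using h0
  · rw [if_neg (by decide)]
    show TTCaux (Equiv.refl (Fin 3)) p (1 + 1) {1} 1 = _
    rw [TTCaux]
    have hs : point (Equiv.refl (Fin 3)) (p 1) {1} 1 = 1 := point_singleton _ _
    have hmem : (1 : Fin 3) ∈ cycleAgents (Equiv.refl (Fin 3)) p {1} :=
      Finset.mem_filter.mpr ⟨by decide, 1, one_pos, by simpa using hs⟩
    rw [if_pos hmem]
    simpa using hs
  · rw [if_pos (by decide)]; simpa using h2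

/-- three-agent failure of group strategy-proofness under general
indifferences. Truthful play gives `(w₂, w₁, w₃)`; if agent 1 misreports
`w₃ P w₂ P w₁` the outcome is `(w₃, w₂, w₁)`: agent 1 is indifferent while agent 3
strictly improves, so coalition `{1,3}` profitably manipulates. -/
theorem TTCtb_not_GSP_example (R R' : Fin 3 → WeakOrder (Fin 3))
    (h10 : (R 0).I 1 2) (h11 : (R 0).P 1 0)
    (h20 : (R 1).P 0 1) (h21 : (R 1).P 1 2)
    (h30 : (R 2).P 0 1) (h31 : (R 2).P 1 2)
    (h10' : (R' 0).P 2 1) (h11' : (R' 0).P 1 0)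
    (hR'1 : R' 1 = R 1) (hR'2 : R' 2 = R 2) :
    TTCtb (Equiv.refl (Fin 3)) R (fun _ a b => a < b) = ![1, 0, 2] ∧
    TTCtb (Equiv.refl (Fin 3)) R' (fun _ a b => a < b) = ![2, 1, 0] ∧
    (R 0).I 2 1 ∧ (R 2).P 0 2 := by
  -- basic relation facts for agent 0 (truthful)
  have nr02 : ¬ (R 0).rel 0 2 := fun h => h11.2 ((R 0).trans _ _ _ h h10.2)
  have r20 : (R 0).rel 2 0 := (R 0).trans _ _ _ h10.2 h11.1
  -- pointing of agent 0 (truthful) over univ is 1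
  have hpt0 : point (Equiv.refl (Fin 3))
      (tieBroken (Equiv.refl (Fin 3)) (R 0) (fun a b => a < b)) Finset.univ 0 = 1 := by
    apply point_eq
    · exact Finset.mem_univ _
    · intro j _
      fin_cases j
      · exact Or.inr (Or.inl h11)
      · exact Or.inl rfl
      · exact Or.inr (Or.inr ⟨h10, by decide⟩)
    · intro m _ hq
      fin_cases m
      · rcases hq 1 (Finset.mem_univ _) with h | h
        · exact absurd h (by decide)
        · exact absurd (tb_rel h) h11.2
      · rfl
      · rcases hq 1 (Finset.mem_univ _) with h | h
        · exact absurd h (by decide)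
        · rcases h with ⟨_, hn⟩ | ⟨_, hlt⟩
          · exact absurd h10.1 hn
          · exact absurd hlt (by decide)
  -- pointing of agent 0 (misreport) over univ is 2
  have nr02' : ¬ (R' 0).rel 0 2 := fun h => h11'.2 ((R' 0).trans _ _ _ h h10'.1)
  have r20' : (R' 0).rel 2 0 := (R' 0).trans _ _ _ h10'.1 h11'.1
  have hpt0' : point (Equiv.refl (Fin 3))
      (tieBroken (Equiv.refl (Fin 3)) (R' 0) (fun a b => a < b)) Finset.univ 0 = 2 := by
    apply point_eq
    · exact Finset.mem_univ _
    · intro j _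
      fin_cases j
      · exact Or.inr (Or.inl ⟨r20', nr02'⟩)
      · exact Or.inr (Or.inl h10')
      · exact Or.inl rfl
    · intro m _ hq
      fin_cases m
      · rcases hq 2 (Finset.mem_univ _) with h | h
        · exact absurd h (by decide)
        · exact absurd (tb_rel h) nr02'
      · rcases hq 2 (Finset.mem_univ _) with h | h
        · exact absurd h (by decide)
        · exact absurd (tb_rel h) h10'.2
      · rfl
  refine ⟨?_, ?_, ⟨h10.2, h10.1⟩,
    ⟨(R 2).trans _ _ _ h30.1 h31.1, fun h => h30.2 ((R 2).trans _ _ _ h31.1 h)⟩⟩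
  · show TTCstrict (Equiv.refl (Fin 3))
      (fun i => tieBroken (Equiv.refl (Fin 3)) (R i) (fun a b => a < b)) = _
    exact TTC_case1 _ hpt0 (point01 (R 1) _ _ h20 h21) (point01 (R 2) _ _ h30 h31)
  · show TTCstrict (Equiv.refl (Fin 3))
      (fun i => tieBroken (Equiv.refl (Fin 3)) (R' i) (fun a b => a < b)) = _
    refine TTC_case2 _ hpt0' ?_ ?_
    · rw [hR'1]; exact point01 (R 1) _ _ h20 h21
    · rw [hR'2]; exact point01 (R 2) _ _ h30 h31


end ShapleyScarf
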